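/- For λ > −1 let μ₀(t;λ) = ∫_0^{∞} s^{λ} exp(t s − s³) ds. Then μ₀(·;λ) is three times differentiable on ℝ and satisfies the third-order linear differential equation d³μ₀/dt³ − (t/3) dμ₀/dt − ((λ+1)/3) μ₀ = 0 for all t ∈ ℝ, with initial values μ₀(0;λ) = Γ((λ+1)/3)/3, (dμ₀/dt)(0;λ) = Γ((λ+2)/3)/3 and (d²μ₀/dt²)(0;λ) = Γ((λ+3)/3)/3, where Γ denotes the Gamma function. -/

import Mathlib

open MeasureTheory Set Real Filter

-- key exponent inequality
lemma sf_exp_bound (t s : ℝ) (hs : 0 ≤ s) : t * s - s ^ 3 ≤ (t ^ 2 + 1) / 2 - s ^ 3 / 2 := by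
  nlinarith [sq_nonneg (t - s), mul_nonneg (mul_nonneg hs hs) hs, sq_nonneg (s - 1),
    mul_nonneg (sq_nonneg (s - 1)) hs]

lemma sf_meas (a t : ℝ) :
    AEStronglyMeasurable (fun s : ℝ => s ^ a * Real.exp (t * s - s ^ 3))
      (volume.restrict (Ioi 0)) := by
  apply ContinuousOn.aestronglyMeasurable _ measurableSet_Ioi
  apply ContinuousOn.mul
  · exact fun x hx => (Real.continuousAt_rpow_const x a (Or.inl (ne_of_gt hx))).continuousWithinAt
  · exact (Real.continuous_exp.comp (by continuity)).continuousOn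

lemma sf_int (a t : ℝ) (ha : -1 < a) :
    IntegrableOn (fun s : ℝ => s ^ a * Real.exp (t * s - s ^ 3)) (Ioi 0) := by
  have hbd : IntegrableOn
      (fun s : ℝ => Real.exp ((t ^ 2 + 1) / 2) * (s ^ a * Real.exp (-(1/2) * s ^ (3:ℝ))))
      (Ioi 0) :=
    (integrableOn_rpow_mul_exp_neg_mul_rpow ha (by norm_num) (by norm_num)).const_mul _
  refine Integrable.mono hbd (sf_meas a t) ?_
  rw [ae_restrict_iff' measurableSet_Ioi]
  filter_upwards with s hs
  have hs' : (0:ℝ) < s := hs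
  have h1 : (0:ℝ) ≤ s ^ a := Real.rpow_nonneg hs'.le a
  rw [Real.norm_eq_abs, Real.norm_eq_abs, abs_of_nonneg (by positivity),
    abs_of_nonneg (by positivity)]
  have h2 : Real.exp (t * s - s ^ 3) ≤
      Real.exp ((t ^ 2 + 1) / 2) * Real.exp (-(1/2) * s ^ (3:ℝ)) := by
    rw [← Real.exp_add]
    apply Real.exp_le_exp.2
    rw [show s ^ (3:ℝ) = s ^ (3:ℕ) by rw [← Real.rpow_natCast]; norm_num]
    have := sf_exp_bound t s hs'.le
    linarith
  calc s ^ a * Real.exp (t * s - s ^ 3)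
      ≤ s ^ a * (Real.exp ((t ^ 2 + 1) / 2) * Real.exp (-(1/2) * s ^ (3:ℝ))) :=
        mul_le_mul_of_nonneg_left h2 h1
    _ = Real.exp ((t ^ 2 + 1) / 2) * (s ^ a * Real.exp (-(1/2) * s ^ (3:ℝ))) := by ring

lemma sf_hasDerivAt (a : ℝ) (ha : -1 < a) (t₀ : ℝ) :
    HasDerivAt (fun t => ∫ s in Ioi (0:ℝ), s ^ a * Real.exp (t * s - s ^ 3))
      (∫ s in Ioi (0:ℝ), s ^ (a+1) * Real.exp (t₀ * s - s ^ 3)) t₀ := by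
  have ha' : (-1:ℝ) < a + 1 := by linarith
  have key := hasDerivAt_integral_of_dominated_loc_of_deriv_le (μ := volume.restrict (Ioi 0))
    (F := fun t s => s ^ a * Real.exp (t * s - s ^ 3))
    (F' := fun t s => s ^ (a+1) * Real.exp (t * s - s ^ 3))
    (x₀ := t₀) (s := Metric.ball t₀ 1)
    (bound := fun s => s ^ (a+1) * Real.exp ((|t₀| + 1) * s - s ^ 3))
    (Metric.ball_mem_nhds t₀ one_pos)
    (Eventually.of_forall fun x => sf_meas a x)
    (sf_int a t₀ ha)
    (sf_meas (a+1) t₀)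
    ?_ (sf_int (a+1) (|t₀|+1) ha') ?_
  · exact key.2
  · rw [ae_restrict_iff' measurableSet_Ioi]
    filter_upwards with s hs x hx
    have hs' : (0:ℝ) < s := hs
    have h1 : (0:ℝ) ≤ s ^ (a+1) := Real.rpow_nonneg hs'.le _
    rw [Real.norm_eq_abs, abs_of_nonneg (by positivity)]
    apply mul_le_mul_of_nonneg_left _ h1
    apply Real.exp_le_exp.2
    have hx' : x ≤ |t₀| + 1 := by
      have := abs_sub_abs_le_abs_sub x t₀
      have h2 : |x - t₀| < 1 := by simpa [Metric.mem_ball, Real.dist_eq] using hx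
      have := le_abs_self x
      linarith [abs_nonneg (x - t₀)]
    nlinarith
  · rw [ae_restrict_iff' measurableSet_Ioi]
    filter_upwards with s hs x _
    have hs' : (0:ℝ) < s := hs
    have h := ((((hasDerivAt_id x).mul_const s).sub_const (s ^ 3)).exp).const_mul (s ^ a)
    refine h.congr_deriv ?_
    simp only [id]
    rw [Real.rpow_add_one (ne_of_gt hs')]
    ring_nf

lemma sf_ibp (l : ℝ) (hl : -1 < l) (t : ℝ) :
    ∫ s in Ioi (0:ℝ), s ^ (l+3) * Real.exp (t * s - s ^ 3) =
      t / 3 * (∫ s in Ioi (0:ℝ), s ^ (l+1) * Real.exp (t * s - s ^ 3)) +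
      (l + 1) / 3 * (∫ s in Ioi (0:ℝ), s ^ l * Real.exp (t * s - s ^ 3)) := by
  have hl1 : (-1:ℝ) < l + 1 := by linarith
  have hl3 : (-1:ℝ) < l + 3 := by linarith
  set f : ℝ → ℝ := fun s => s ^ (l+1) * Real.exp (t * s - s ^ 3) with hf
  set f' : ℝ → ℝ := fun s => (l+1) * (s ^ l * Real.exp (t * s - s ^ 3)) +
      t * (s ^ (l+1) * Real.exp (t * s - s ^ 3)) -
      3 * (s ^ (l+3) * Real.exp (t * s - s ^ 3)) with hf'
  have int0 := sf_int l t hl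
  have int1 := sf_int (l+1) t hl1
  have int3 := sf_int (l+3) t hl3
  have hderiv : ∀ x ∈ Ioi (0:ℝ), HasDerivAt f (f' x) x := by
    intro x hx
    have hx' : (0:ℝ) < x := hx
    have h1 : HasDerivAt (fun x : ℝ => x ^ (l+1)) ((l+1) * x ^ l) x := by
      have := Real.hasDerivAt_rpow_const (x := x) (p := l+1) (Or.inl (ne_of_gt hx'))
      simpa [add_sub_cancel_right] using this
    have hinner : HasDerivAt (fun x : ℝ => t * x - x ^ 3) (t - 3 * x ^ 2) x := by
      have h := ((hasDerivAt_id x).const_mul t).sub (hasDerivAt_pow 3 x)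
      norm_num at h
      exact h
    have h2 := hinner.exp
    have h := h1.mul h2
    refine h.congr_deriv ?_
    have h3 : x ^ (l+3) = x ^ (l+1) * x ^ 2 := by
      rw [show l + 3 = (l+1) + (2:ℕ) by push_cast; ring, Real.rpow_add_natCast (ne_of_gt hx')]
    have h4 : f' x = (l+1) * (x ^ l * Real.exp (t*x - x^3)) +
        t * (x ^ (l+1) * Real.exp (t*x - x^3)) -
        3 * (x ^ (l+3) * Real.exp (t*x - x^3)) := rfl
    rw [h4, h3]
    ring
  have hcont : ContinuousWithinAt f (Ici (0:ℝ)) 0 := by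
    apply ContinuousWithinAt.mul
    · exact (Real.continuousAt_rpow_const 0 (l+1) (Or.inr (by linarith))).continuousWithinAt
    · exact (Real.continuous_exp.comp (by continuity)).continuousWithinAt
  have f'int : IntegrableOn f' (Ioi 0) :=
    (((int0.const_mul (l+1)).add (int1.const_mul t)).sub (int3.const_mul 3))
  have htends : Tendsto f atTop (nhds 0) := by
    have hlim : Tendsto (fun s : ℝ =>
        Real.exp ((t ^ 2 + 1) / 2) * (s ^ (l+1) * Real.exp (-(1/2) * s))) atTop (nhds 0) := by
      have := tendsto_rpow_mul_exp_neg_mul_atTop_nhds_zero (l+1) (1/2) (by norm_num)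
      simpa using this.const_mul (Real.exp ((t ^ 2 + 1) / 2))
    apply tendsto_of_tendsto_of_tendsto_of_le_of_le' tendsto_const_nhds hlim
    · filter_upwards [eventually_ge_atTop (1:ℝ)] with s hs
      positivity
    · filter_upwards [eventually_ge_atTop (1:ℝ)] with s hs
      have hs0 : (0:ℝ) < s := by linarith
      have h1 : (0:ℝ) ≤ s ^ (l+1) := Real.rpow_nonneg hs0.le _
      have h2 : Real.exp (t * s - s ^ 3) ≤
          Real.exp ((t ^ 2 + 1) / 2) * Real.exp (-(1/2) * s) := by
        rw [← Real.exp_add]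
        apply Real.exp_le_exp.2
        have hss : s ≤ s ^ 3 := by nlinarith [mul_nonneg (mul_nonneg hs0.le (sub_nonneg.2 hs)) (by linarith : (0:ℝ) ≤ s + 1)]
        have := sf_exp_bound t s hs0.le
        linarith
      calc f s ≤ s ^ (l+1) * (Real.exp ((t ^ 2 + 1) / 2) * Real.exp (-(1/2) * s)) :=
            mul_le_mul_of_nonneg_left h2 h1
        _ = Real.exp ((t ^ 2 + 1) / 2) * (s ^ (l+1) * Real.exp (-(1/2) * s)) := by ring
  have hmain := integral_Ioi_of_hasDerivAt_of_tendsto hcont hderiv f'int htends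
  have hf0 : f 0 = 0 := by
    simp [hf, Real.zero_rpow (by linarith : l + 1 ≠ 0)]
  rw [hf0, sub_zero] at hmain
  have hexp : ∫ s in Ioi (0:ℝ), f' s =
      (l+1) * (∫ s in Ioi (0:ℝ), s ^ l * Real.exp (t * s - s ^ 3)) +
      t * (∫ s in Ioi (0:ℝ), s ^ (l+1) * Real.exp (t * s - s ^ 3)) -
      3 * (∫ s in Ioi (0:ℝ), s ^ (l+3) * Real.exp (t * s - s ^ 3)) := by
    have intA : Integrable (fun s : ℝ => (l+1) * (s ^ l * Real.exp (t*s - s^3)) +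
        t * (s ^ (l+1) * Real.exp (t*s - s^3))) (volume.restrict (Ioi 0)) :=
      (int0.const_mul (l+1)).add (int1.const_mul t)
    have intC : Integrable (fun s : ℝ => 3 * (s ^ (l+3) * Real.exp (t*s - s^3)))
        (volume.restrict (Ioi 0)) := int3.const_mul 3
    rw [hf']
    rw [integral_sub intA intC, integral_add (int0.const_mul (l+1)) (int1.const_mul t),
      integral_const_mul, integral_const_mul, integral_const_mul]
  rw [hmain] at hexp
  linarith

lemma sf_init (a : ℝ) (ha : -1 < a) :
    ∫ s in Ioi (0:ℝ), s ^ a * Real.exp ((0:ℝ) * s - s ^ 3) = Real.Gamma ((a+1)/3) / 3 := by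
  have : ∀ s ∈ Ioi (0:ℝ), s ^ a * Real.exp ((0:ℝ) * s - s ^ 3) =
      s ^ a * Real.exp (- s ^ (3:ℝ)) := by
    intro s hs
    rw [show s ^ (3:ℝ) = s ^ (3:ℕ) by rw [← Real.rpow_natCast]; norm_num]
    norm_num
  rw [setIntegral_congr_fun measurableSet_Ioi this,
    integral_rpow_mul_exp_neg_rpow (by norm_num) ha]
  ring

/-- The first moment `μ₀(t;λ) = ∫_0^∞ s^λ exp(ts − s³) ds` of the generalised sextic
Freud weight is three times differentiable and satisfies the third-order equation
`μ₀''' − (t/3) μ₀' − ((λ+1)/3) μ₀ = 0`, with initial values given by Gamma functions. -/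
theorem sextic_freud_moment_ode (l : ℝ) (hl : -1 < l)
    (μ₀ : ℝ → ℝ)
    (hμ₀ : ∀ t : ℝ, μ₀ t = ∫ s in Set.Ioi (0 : ℝ), s ^ l * Real.exp (t * s - s ^ 3)) :
    (Differentiable ℝ μ₀ ∧ Differentiable ℝ (deriv μ₀) ∧
      Differentiable ℝ (deriv (deriv μ₀))) ∧
    (∀ t : ℝ, deriv (deriv (deriv μ₀)) t - t / 3 * deriv μ₀ t - (l + 1) / 3 * μ₀ t = 0) ∧
    μ₀ 0 = Real.Gamma ((l + 1) / 3) / 3 ∧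
    deriv μ₀ 0 = Real.Gamma ((l + 2) / 3) / 3 ∧
    deriv (deriv μ₀) 0 = Real.Gamma ((l + 3) / 3) / 3 := by
  have hl1 : (-1:ℝ) < l + 1 := by linarith
  have hl2 : (-1:ℝ) < l + 2 := by linarith
  set M : ℝ → ℝ → ℝ := fun a t => ∫ s in Ioi (0:ℝ), s ^ a * Real.exp (t * s - s ^ 3) with hM
  have hμ : μ₀ = M l := funext hμ₀
  have hD0 : ∀ t, HasDerivAt μ₀ (M (l+1) t) t := by
    intro t; rw [hμ]; exact sf_hasDerivAt l hl t
  have hd1 : deriv μ₀ = M (l+1) := funext fun t => (hD0 t).deriv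
  have hD1 : ∀ t, HasDerivAt (deriv μ₀) (M (l+2) t) t := by
    intro t; rw [hd1]
    have := sf_hasDerivAt (l+1) hl1 t
    simpa [show l + 1 + 1 = l + 2 by ring] using this
  have hd2 : deriv (deriv μ₀) = M (l+2) := funext fun t => (hD1 t).deriv
  have hD2 : ∀ t, HasDerivAt (deriv (deriv μ₀)) (M (l+3) t) t := by
    intro t; rw [hd2]
    have := sf_hasDerivAt (l+2) hl2 t
    simpa [show l + 2 + 1 = l + 3 by ring] using this
  have hd3 : ∀ t, deriv (deriv (deriv μ₀)) t = M (l+3) t := fun t => (hD2 t).deriv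
  refine ⟨⟨fun t => (hD0 t).differentiableAt, fun t => (hD1 t).differentiableAt,
    fun t => (hD2 t).differentiableAt⟩, ?_, ?_, ?_, ?_⟩
  · intro t
    rw [hd3 t, hd1, hμ]
    have := sf_ibp l hl t
    simp only [hM] at *
    linarith
  · rw [hμ]; exact sf_init l hl
  · rw [hd1]
    have h := sf_init (l+1) hl1
    rw [show l + 1 + 1 = l + 2 by ring] at h
    exact h
  · rw [hd2]
    have h := sf_init (l+2) hl2
    rw [show l + 2 + 1 = l + 3 by ring] at h
    exact h
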